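/- Let L and G be self-adjoint operators on a Hilbert space with G(D_L) ⊆ D_L ⊆ D_G, and let {λ_k} and {u_k} be the eigenvalues and an orthonormal basis of eigenvectors of L. Then for each j, the sum over all k with λ_k ≠ λ_j of |⟨[L,G]u_j, u_k⟩|² / (λ_k − λ_j) equals −(1/2)⟨[[L,G],G]u_j, u_j⟩. -/

import Mathlib

open scoped RealInnerProductSpace

/-- Levitin–Parnovski identity: for self-adjoint `L`, `G` and an orthonormal (Hilbert)
basis `{u_k}` of eigenvectors of `L` with eigenvalues `λ_k`, for each `j`,
`Σ_{k : λ_k ≠ λ_j} |⟨[L,G]u_j, u_k⟩|² / (λ_k − λ_j) = −(1/2)⟨[[L,G],G]u_j, u_j⟩`. -/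
theorem levitin_parnovski_identity
    {H : Type*} [NormedAddCommGroup H] [InnerProductSpace ℝ H] [CompleteSpace H]
    (L G : H →ₗ[ℝ] H) (hL : L.IsSymmetric) (hG : G.IsSymmetric)
    (b : HilbertBasis ℕ ℝ H)
    (lam : ℕ → ℝ) (heig : ∀ k, L (b k) = lam k • b k)
    (j : ℕ) :
    ∑' k : {k : ℕ // lam k ≠ lam j},
        ⟪(L ∘ₗ G - G ∘ₗ L) (b j), b (k : ℕ)⟫ ^ 2 / (lam (k : ℕ) - lam j)
      = -(1 / 2) *
        ⟪((L ∘ₗ G - G ∘ₗ L) ∘ₗ G - G ∘ₗ (L ∘ₗ G - G ∘ₗ L)) (b j), b j⟫ := by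
  set C := L ∘ₗ G - G ∘ₗ L with hC
  -- key eigenvalue identity
  have hCk : ∀ k, ⟪C (b j), b k⟫ = (lam k - lam j) * ⟪G (b j), b k⟫ := by
    intro k
    have h1 : ⟪L (G (b j)), b k⟫ = lam k * ⟪G (b j), b k⟫ := by
      rw [hL (G (b j)) (b k), heig k, real_inner_smul_right]
    have h2 : ⟪G (L (b j)), b k⟫ = lam j * ⟪G (b j), b k⟫ := by
      rw [heig j, map_smul, real_inner_smul_left]
    simp only [hC, LinearMap.sub_apply, LinearMap.comp_apply, inner_sub_left, h1, h2]
    ring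
  -- the RHS equals ⟪G b j, C b j⟫
  have hGC : ⟪G (b j), C (b j)⟫
      = ⟪L (G (b j)), G (b j)⟫ - lam j * ⟪G (b j), G (b j)⟫ := by
    simp only [hC, LinearMap.sub_apply, LinearMap.comp_apply, inner_sub_right, heig j,
      map_smul, real_inner_smul_right]
    rw [real_inner_comm (G (b j)) (L (G (b j)))]
  have hRHS : ⟪(C ∘ₗ G - G ∘ₗ C) (b j), b j⟫
      = -2 * (⟪L (G (b j)), G (b j)⟫ - lam j * ⟪G (b j), G (b j)⟫) := by
    have e1 : ⟪C (G (b j)), b j⟫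
        = lam j * ⟪G (G (b j)), b j⟫ - ⟪L (G (b j)), G (b j)⟫ := by
      simp only [hC, LinearMap.sub_apply, LinearMap.comp_apply, inner_sub_left]
      rw [hL (G (G (b j))) (b j), heig j, real_inner_smul_right,
        hG (L (G (b j))) (b j), real_inner_comm]
    have e2 : ⟪G (C (b j)), b j⟫
        = ⟪L (G (b j)), G (b j)⟫ - lam j * ⟪G (b j), G (b j)⟫ := by
      rw [hG (C (b j)) (b j), real_inner_comm, hGC]
    have e3 : ⟪G (G (b j)), b j⟫ = ⟪G (b j), G (b j)⟫ := hG (G (b j)) (b j)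
    simp only [LinearMap.sub_apply, LinearMap.comp_apply, inner_sub_left, e1, e2, e3]
    ring
  -- Parseval
  have hPar : ∑' k, ⟪G (b j), b k⟫ * ⟪b k, C (b j)⟫ = ⟪G (b j), C (b j)⟫ :=
    b.tsum_inner_mul_inner (G (b j)) (C (b j))
  have hterm : ∀ k, ⟪G (b j), b k⟫ * ⟪b k, C (b j)⟫
      = (lam k - lam j) * ⟪G (b j), b k⟫ ^ 2 := by
    intro k
    have h := hCk k
    rw [real_inner_comm] at h
    rw [h]
    ring
  -- reduce LHS to tsum over the subtype of f
  have hLHS : ∑' k : {k : ℕ // lam k ≠ lam j},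
      ⟪C (b j), b (k : ℕ)⟫ ^ 2 / (lam (k : ℕ) - lam j)
      = ∑' k : {k : ℕ // lam k ≠ lam j},
        (lam (k : ℕ) - lam j) * ⟪G (b j), b (k : ℕ)⟫ ^ 2 := by
    refine tsum_congr fun k => ?_
    have hk : lam (k : ℕ) - lam j ≠ 0 := sub_ne_zero.2 k.2
    rw [hCk k]
    field_simp
  have hsupp : Function.support (fun k => (lam k - lam j) * ⟪G (b j), b k⟫ ^ 2)
      ⊆ {k : ℕ | lam k ≠ lam j} := by
    intro k hk
    simp only [Function.mem_support] at hk
    intro h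
    apply hk
    simp [h]
  have hsub : ∑' k : {k : ℕ // lam k ≠ lam j},
        (lam (k : ℕ) - lam j) * ⟪G (b j), b (k : ℕ)⟫ ^ 2
      = ∑' k, (lam k - lam j) * ⟪G (b j), b k⟫ ^ 2 :=
    tsum_subtype_eq_of_support_subset hsupp
  rw [hLHS, hsub, hRHS]
  rw [show (∑' k, (lam k - lam j) * ⟪G (b j), b k⟫ ^ 2)
      = ∑' k, ⟪G (b j), b k⟫ * ⟪b k, C (b j)⟫ from tsum_congr fun k => (hterm k).symm]
  rw [hPar, hGC]
  ring
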